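/- arXiv:0908.1698 — 2 statements merged into one kernel-verified Lean document; each statement's English description precedes it below -/
import Mathlib

section
/- Let d ≥ 1 and let P be an illuminated d-polytope with Γ(P) = 1. Then P has at least 2d vertices, and there is a perfect matching on the inner diagonals of P, i.e., there is a partition of the vertex set of P into pairs {u, v} such that each segment [u, v] is an inner diagonal of P. -/
open scoped RealInnerProductSpace

noncomputable section

/-- We work in `ℝ^d`, modelled as Euclidean space. -/
abbrev Euc (d : ℕ) := EuclideanSpace ℝ (Fin d)

/-- `P` is a polytope: the convex hull of a finite set of points. -/
def IsPolytope {d : ℕ} (P : Set (Euc d)) : Prop :=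
  ∃ V : Set (Euc d), V.Finite ∧ P = convexHull ℝ V

/-- `P` is a `d`-polytope in `ℝ^d`: a polytope whose affine span is all of `ℝ^d`. -/
def IsDPolytope {d : ℕ} (P : Set (Euc d)) : Prop :=
  IsPolytope P ∧ affineSpan ℝ P = ⊤

/-- The vertices of a polytope are its extreme points. -/
def verts {d : ℕ} (P : Set (Euc d)) : Set (Euc d) :=
  Set.extremePoints ℝ P

/-- `[u,v]` is an inner diagonal of `P`: `u`, `v` are distinct vertices and the
relative interior of the segment (the open segment) meets the interior of `P`. -/
def InnerDiagonal {d : ℕ} (P : Set (Euc d)) (u v : Euc d) : Prop :=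
  u ∈ verts P ∧ v ∈ verts P ∧ u ≠ v ∧ (openSegment ℝ u v ∩ interior P).Nonempty

/-- `P` is illuminated: every vertex lies on an inner diagonal. -/
def Illuminated {d : ℕ} (P : Set (Euc d)) : Prop :=
  ∀ v ∈ verts P, ∃ u, InnerDiagonal P u v

/-- A set `U` of vertices illuminates itself if every `v ∈ U` lies on an inner
diagonal `[u,v]` with `u ∈ U`. -/
def IlluminatesItself {d : ℕ} (P : Set (Euc d)) (U : Set (Euc d)) : Prop :=
  ∀ v ∈ U, ∃ u ∈ U, InnerDiagonal P u v

/-- A set `W` of vertices lies opposite the vertex `v ∉ W` if `[v,w]` is an inner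
diagonal for all `w ∈ W`, and the remaining vertices illuminate themselves. -/
def LiesOpposite {d : ℕ} (P : Set (Euc d)) (W : Set (Euc d)) (v : Euc d) : Prop :=
  v ∈ verts P ∧ W ⊆ verts P ∧ v ∉ W ∧ (∀ w ∈ W, InnerDiagonal P v w) ∧
    IlluminatesItself P (verts P \ (W ∪ {v}))

/-- `Γ(P)`: the maximum cardinality of a set lying opposite some vertex (`0` if none). -/
def Gamma {d : ℕ} (P : Set (Euc d)) : ℕ :=
  sSup {n : ℕ | ∃ W v, LiesOpposite P W v ∧ W.ncard = n}

/-- `p(d) = ⌈(√(4d+1) - 1)/2⌉`. -/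
def pf (d : ℕ) : ℕ := ⌈(Real.sqrt (4 * d + 1) - 1) / 2⌉₊

/-- `M(d) = min {2d, d + p(d) + ⌈d/p(d)⌉ + 1}`. -/
def Mf (d : ℕ) : ℕ := min (2 * d) (d + pf d + ⌈(d : ℝ) / (pf d : ℝ)⌉₊ + 1)

/-- A Mani `d`-polytope: an illuminated `d`-polytope with exactly `M(d)` vertices. -/
def IsManiPolytope {d : ℕ} (P : Set (Euc d)) : Prop :=
  IsDPolytope P ∧ Illuminated P ∧ (verts P).ncard = Mf d

/-- A facet of a `d`-polytope: an exposed face of dimension `d - 1`. -/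
def IsFacetOf {d : ℕ} (P F : Set (Euc d)) : Prop :=
  IsExposed ℝ P F ∧ Module.finrank ℝ (affineSpan ℝ F).direction = d - 1

/-- `S` is the vertex set of an (exposed) face of `P`. -/
def IsFaceVertexSet {d : ℕ} (P S : Set (Euc d)) : Prop :=
  ∃ F : Set (Euc d), IsExposed ℝ P F ∧ S = verts P ∩ F

/-- Combinatorial equivalence: a bijection of the vertex sets carrying vertex sets
of faces to vertex sets of faces in both directions. -/
def CombEquiv {d : ℕ} (P Q : Set (Euc d)) : Prop :=
  ∃ f : Euc d → Euc d, Set.BijOn f (verts P) (verts Q) ∧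
    ∀ S ⊆ verts P, (IsFaceVertexSet P S ↔ IsFaceVertexSet Q (f '' S))

/-- The `d`-dimensional crosspolytope `conv {±e₁, …, ±e_d}`. -/
def crossPolytope (d : ℕ) : Set (Euc d) :=
  convexHull ℝ
    {x | ∃ i : Fin d, x = EuclideanSpace.single i 1 ∨ x = -EuclideanSpace.single i 1}

/-- `{u, v}` is the vertex set of an edge (a `1`-dimensional exposed face) of `P`. -/
def IsEdgeVertexSet {d : ℕ} (P : Set (Euc d)) (u v : Euc d) : Prop :=
  ∃ F : Set (Euc d), IsExposed ℝ P F ∧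
    Module.finrank ℝ (affineSpan ℝ F).direction = 1 ∧ Set.extremePoints ℝ F = {u, v}

/-! ### Auxiliary combinatorial lemma -/

/-- Abstract matching lemma: in a finite "graph" where every vertex has a neighbour
and no set of two-or-more common neighbours of a vertex can be removed (together with
the vertex) leaving a graph with no isolated vertices, the vertex set can be
partitioned into edges. -/
lemma pairing_of_nobig {α : Type*} (E : α → α → Prop)
    (hsym : ∀ {u v : α}, E u v → E v u) (hirr : ∀ v : α, ¬ E v v) :
    ∀ n : ℕ, ∀ V : Set α, V.Finite → V.ncard = n →
      (∀ v ∈ V, ∃ u ∈ V, E u v) →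
      (∀ v ∈ V, ∀ W ⊆ V, (∀ w ∈ W, E v w) → v ∉ W → 2 ≤ W.ncard →
        ¬ (∀ y ∈ V \ (W ∪ {v}), ∃ u ∈ V \ (W ∪ {v}), E u y)) →
      ∃ Pairing : Set (Set α), ⋃₀ Pairing = V ∧ Pairing.PairwiseDisjoint id ∧
        (∀ q ∈ Pairing, ∃ u v, u ∈ V ∧ v ∈ V ∧ E u v ∧ q = {u, v}) ∧
        Pairing.Finite ∧ V.ncard = 2 * Pairing.ncard := by
  intro n
  induction n using Nat.strong_induction_on with
  | _ n IH =>
  intro V hfin hcard hdeg hnb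
  rcases V.eq_empty_or_nonempty with rfl | hne
  · exact ⟨∅, by simp, by simp, by simp, Set.finite_empty, by simp⟩
  classical
  -- neighbourhoods
  set N : α → Set α := fun v => {u ∈ V | E u v} with hNdef
  have hNsub : ∀ v, N v ⊆ V := fun v u hu => hu.1
  have hNfin : ∀ v, (N v).Finite := fun v => hfin.subset (hNsub v)
  obtain ⟨x, hxV, hxmin⟩ := Set.exists_min_image V (fun v => (N v).ncard) hfin hne
  obtain ⟨w, hwV, hwx⟩ := hdeg x hxV
  have hwNx : w ∈ N x := ⟨hwV, hwx⟩
  have hxw : x ≠ w := by rintro rfl; exact hirr x hwx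
  -- the key claim: removing {x, w} leaves no isolated vertex
  have key : ∀ y ∈ V \ ({x, w} : Set α), ∃ u ∈ V \ ({x, w} : Set α), E u y := by
    by_contra hcon
    push_neg at hcon
    obtain ⟨z, hzmem, hz⟩ := hcon
    obtain ⟨hzV, hznot⟩ := hzmem
    have hzx : z ≠ x := fun h => hznot (by simp [h])
    have hzw : z ≠ w := fun h => hznot (by simp [h])
    have hzN : ∀ u ∈ N z, u = x ∨ u = w := by
      intro u hu
      by_contra hc
      push_neg at hc
      exact hz u ⟨hu.1, by simp [hc.1, hc.2]⟩ hu.2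
    by_cases hxz : E x z
    · -- `x` and `z` are mutual neighbours of degree two
      have hzNx : z ∈ N x := ⟨hzV, hsym hxz⟩
      have hwzsub : ({w, z} : Set α) ⊆ N x := by
        intro u hu
        rcases hu with rfl | hu
        · exact hwNx
        · rw [Set.mem_singleton_iff] at hu; subst hu; exact hzNx
      have hwz : w ≠ z := fun h => hzw h.symm
      have h2 : 2 ≤ (N x).ncard := by
        calc 2 = ({w, z} : Set α).ncard := (Set.ncard_pair hwz).symm
          _ ≤ (N x).ncard := Set.ncard_le_ncard hwzsub (hNfin x)
      have hNzsub : N z ⊆ ({x, w} : Set α) := by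
        intro u hu
        rcases hzN u hu with rfl | rfl <;> simp
      have hdz2 : 2 ≤ (N z).ncard := le_trans h2 (hxmin z hzV)
      have hNz : N z = ({x, w} : Set α) :=
        Set.eq_of_subset_of_ncard_le hNzsub
          (by rw [Set.ncard_pair hxw]; exact hdz2) ((Set.finite_singleton w).insert x)
      have hdz : (N z).ncard = 2 := by
        rw [hNz, Set.ncard_pair hxw]
      have hdx : (N x).ncard = 2 :=
        le_antisymm (by rw [← hdz]; exact hxmin z hzV) h2
      have hNx : N x = ({w, z} : Set α) :=
        (Set.eq_of_subset_of_ncard_le hwzsub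
          (by rw [hdx, Set.ncard_pair hwz]) (hNfin x)).symm
      -- contradict `hnb` with `v = w`, `W = {x, z}`
      refine hnb w hwV ({x, z} : Set α) ?_ ?_ ?_ ?_ ?_
      · intro u hu; rcases hu with rfl | hu
        · exact hxV
        · rw [Set.mem_singleton_iff] at hu; subst hu; exact hzV
      · intro u hu; rcases hu with rfl | hu
        · exact hwNx.2
        · rw [Set.mem_singleton_iff] at hu; rw [hu]
          exact (show w ∈ N z by rw [hNz]; simp).2
      · intro h; rcases h with h | h
        · exact hxw h.symm
        · rw [Set.mem_singleton_iff] at h; exact hwz h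
      · rw [Set.ncard_pair (fun h => hzx h.symm)]
      · intro y hy
        obtain ⟨hyV, hynot⟩ := hy
        have hyx : y ≠ x := fun h => hynot (by simp [h])
        have hyz : y ≠ z := fun h => hynot (by simp [h])
        have hyw : y ≠ w := fun h => hynot (by simp [h])
        by_contra hno
        push_neg at hno
        have hNy : N y ⊆ ({w} : Set α) := by
          intro u hu
          rcases eq_or_ne u x with rfl | hux
          · have : y ∈ N u := ⟨hyV, hsym hu.2⟩
            rw [hNx] at this
            rcases this with h | h
            · exact absurd h hyw
            · rw [Set.mem_singleton_iff] at h; exact absurd h hyz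
          rcases eq_or_ne u z with rfl | huz
          · have : y ∈ N u := ⟨hyV, hsym hu.2⟩
            rw [hNz] at this
            rcases this with h | h
            · exact absurd h hyx
            · rw [Set.mem_singleton_iff] at h; exact absurd h hyw
          rcases eq_or_ne u w with rfl | huw
          · simp
          · exact absurd hu.2 (hno u ⟨hu.1, by simp [hux, huz, huw]⟩)
        have h1 : (N y).ncard ≤ 1 := by
          simpa using Set.ncard_le_ncard hNy (Set.finite_singleton w)
        have h2y : 2 ≤ (N y).ncard := by rw [← hdx]; exact hxmin y hyV
        omega
    · -- `z` is a pendant vertex attached to `w`, and so is `x`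
      have hNzsub : N z ⊆ ({w} : Set α) := by
        intro u hu
        rcases hzN u hu with rfl | rfl
        · exact absurd hu.2 hxz
        · simp
      obtain ⟨u0, hu0V, hu0⟩ := hdeg z hzV
      have hu0w : u0 = w := Set.mem_singleton_iff.mp (hNzsub ⟨hu0V, hu0⟩)
      have hdz1 : (N z).ncard ≤ 1 := by
        simpa using Set.ncard_le_ncard hNzsub (Set.finite_singleton w)
      -- the set of pendant vertices attached to `w`
      set S : Set α := {y ∈ V | N y ⊆ ({w} : Set α)} with hSdef
      have hSV : S ⊆ V := fun y hy => hy.1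
      have hxS : x ∈ S := by
        refine ⟨hxV, ?_⟩
        intro u hu
        have h1x : (N x).ncard ≤ 1 := le_trans (hxmin z hzV) hdz1
        have : N x = {w} := by
          have hx1 : 1 ≤ (N x).ncard := (Set.ncard_pos (hNfin x)).mpr ⟨w, hwNx⟩
          obtain ⟨a, ha⟩ := Set.ncard_eq_one.mp (le_antisymm h1x hx1)
          have : w = a := by have := hwNx; rw [ha] at this; exact this
          rw [ha, ← this]
        rw [this] at hu; exact hu
      have hzS : z ∈ S := ⟨hzV, hNzsub⟩
      have hwS : w ∉ S := by
        intro hw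
        obtain ⟨u1, hu1V, hu1⟩ := hdeg w hwV
        have := Set.mem_singleton_iff.mp (hw.2 ⟨hu1V, hu1⟩)
        subst this
        exact hirr u1 hu1
      refine hnb w hwV S hSV ?_ hwS ?_ ?_
      · intro s hs
        obtain ⟨u1, hu1V, hu1⟩ := hdeg s hs.1
        have := Set.mem_singleton_iff.mp (hs.2 ⟨hu1V, hu1⟩)
        subst this; exact hu1
      · have hsub : ({x, z} : Set α) ⊆ S := by
          intro u hu; rcases hu with rfl | hu
          · exact hxS
          · rw [Set.mem_singleton_iff] at hu; subst hu; exact hzS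
        calc 2 = ({x, z} : Set α).ncard := (Set.ncard_pair (fun h => hzx h.symm)).symm
          _ ≤ S.ncard := Set.ncard_le_ncard hsub (hfin.subset hSV)
      · intro y hy
        obtain ⟨hyV, hynot⟩ := hy
        have hyw : y ≠ w := fun h => hynot (by simp [h])
        have hyS : y ∉ S := fun h => hynot (Set.mem_union_left _ h)
        by_contra hno
        push_neg at hno
        refine hyS ⟨hyV, ?_⟩
        intro u hu
        rcases eq_or_ne u w with rfl | huw
        · simp
        have huS : u ∉ S := by
          intro huS'
          exact hyw (Set.mem_singleton_iff.mp (huS'.2 ⟨hyV, hsym hu.2⟩))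
        exact absurd hu.2 (hno u ⟨hu.1, fun h => h.elim huS (fun h' => huw h')⟩)
  -- apply the induction hypothesis to `V \ {x, w}`
  have hsub2 : ({x, w} : Set α) ⊆ V := by
    intro u hu; rcases hu with rfl | hu
    · exact hxV
    · rw [Set.mem_singleton_iff] at hu; subst hu; exact hwV
  have hcard2 : ({x, w} : Set α).ncard = 2 := Set.ncard_pair hxw
  have h2n : 2 ≤ n := by
    rw [← hcard, ← hcard2]; exact Set.ncard_le_ncard hsub2 hfin
  have hRfin : (V \ ({x, w} : Set α)).Finite := hfin.diff
  have hRcard : (V \ ({x, w} : Set α)).ncard = n - 2 := by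
    rw [Set.ncard_diff hsub2 ((Set.finite_singleton w).insert x), hcard, hcard2]
  have hnbR : ∀ v ∈ V \ ({x, w} : Set α), ∀ W ⊆ V \ ({x, w} : Set α),
      (∀ w' ∈ W, E v w') → v ∉ W → 2 ≤ W.ncard →
      ¬ (∀ y ∈ (V \ ({x, w} : Set α)) \ (W ∪ {v}),
          ∃ u ∈ (V \ ({x, w} : Set α)) \ (W ∪ {v}), E u y) := by
    intro v hvR W hWR hE hvW h2 hself
    refine hnb v hvR.1 W (hWR.trans Set.diff_subset) hE hvW h2 ?_
    intro y hy
    obtain ⟨hyV, hynot⟩ := hy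
    rcases eq_or_ne y x with rfl | hyx
    · refine ⟨w, ⟨hwV, ?_⟩, hwx⟩
      rintro (h | h)
      · exact (hWR h).2 (by simp)
      · rw [Set.mem_singleton_iff] at h; subst h; exact hvR.2 (by simp)
    rcases eq_or_ne y w with rfl | hyw
    · refine ⟨x, ⟨hxV, ?_⟩, hsym hwx⟩
      rintro (h | h)
      · exact (hWR h).2 (by simp)
      · rw [Set.mem_singleton_iff] at h; subst h; exact hvR.2 (by simp)
    · obtain ⟨u, hu, hE'⟩ := hself y ⟨⟨hyV, by simp [hyx, hyw]⟩, hynot⟩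
      exact ⟨u, ⟨hu.1.1, hu.2⟩, hE'⟩
  obtain ⟨Pr, hPrU, hPrD, hPrq, hPrF, hPrC⟩ :=
    IH (n - 2) (by omega) (V \ ({x, w} : Set α)) hRfin hRcard key hnbR
  have hnotmem : ({x, w} : Set α) ∉ Pr := by
    intro h
    have hsub : ({x, w} : Set α) ⊆ V \ ({x, w} : Set α) := by
      rw [← hPrU]; exact Set.subset_sUnion_of_mem h
    exact (hsub (Set.mem_insert x {w})).2 (Set.mem_insert x {w})
  refine ⟨insert ({x, w} : Set α) Pr, ?_, ?_, ?_, hPrF.insert _, ?_⟩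
  · rw [Set.sUnion_insert, hPrU, Set.union_diff_cancel hsub2]
  · refine hPrD.insert ?_
    intro q hq _
    have hqR : q ⊆ V \ ({x, w} : Set α) := by
      rw [← hPrU]; exact Set.subset_sUnion_of_mem hq
    exact Set.disjoint_left.mpr (fun a ha haq => (hqR haq).2 ha)
  · intro q hq
    rcases Set.mem_insert_iff.mp hq with rfl | hq'
    · exact ⟨x, w, hxV, hwV, hsym hwx, rfl⟩
    · obtain ⟨u, v, huR, hvR, hE', hq''⟩ := hPrq q hq'
      exact ⟨u, v, huR.1, hvR.1, hE', hq''⟩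
  · rw [Set.ncard_insert_of_notMem hnotmem hPrF, hcard]
    omega

/-- If `P` is an illuminated `d`-polytope (`d ≥ 1`) with `Γ(P) = 1`,
then `P` has at least `2d` vertices and there is a perfect matching on the inner
diagonals: a partition of the vertex set into pairs spanning inner diagonals. -/
theorem illuminated_gammaOne_card_and_matching {d : ℕ} (hd : 1 ≤ d)
    (P : Set (Euc d)) (hP : IsDPolytope P) (hIll : Illuminated P)
    (hGamma : Gamma P = 1) :
    2 * d ≤ (verts P).ncard ∧
      ∃ Pairing : Set (Set (Euc d)), ⋃₀ Pairing = verts P ∧ Pairing.PairwiseDisjoint id ∧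
        ∀ q ∈ Pairing, ∃ u v : Euc d, InnerDiagonal P u v ∧ q = {u, v} := by
  classical
  obtain ⟨⟨V0, hV0fin, hPV0⟩, hspan⟩ := hP
  have hvrfl : verts P = Set.extremePoints ℝ P := rfl
  have hvertsub : verts P ⊆ V0 := by
    rw [hvrfl, hPV0]; exact extremePoints_convexHull_subset
  have hvfin : (verts P).Finite := hV0fin.subset hvertsub
  have hsym : ∀ {u v : Euc d}, InnerDiagonal P u v → InnerDiagonal P v u := by
    rintro u v ⟨h1, h2, h3, h4⟩
    exact ⟨h2, h1, h3.symm, by rwa [openSegment_symm]⟩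
  have hirr : ∀ v : Euc d, ¬ InnerDiagonal P v v := fun v h => h.2.2.1 rfl
  have hdeg : ∀ v ∈ verts P, ∃ u ∈ verts P, InnerDiagonal P u v := by
    intro v hv
    obtain ⟨u, hu⟩ := hIll v hv
    exact ⟨u, hu.1, hu⟩
  have hnb : ∀ v ∈ verts P, ∀ W ⊆ verts P, (∀ w ∈ W, InnerDiagonal P v w) → v ∉ W →
      2 ≤ W.ncard →
      ¬ (∀ y ∈ verts P \ (W ∪ {v}), ∃ u ∈ verts P \ (W ∪ {v}), InnerDiagonal P u y) := by
    intro v hv W hW hE hvW h2 hself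
    have hLO : LiesOpposite P W v := ⟨hv, hW, hvW, hE, hself⟩
    have hbdd : BddAbove {n : ℕ | ∃ W' v', LiesOpposite P W' v' ∧ W'.ncard = n} := by
      refine ⟨(verts P).ncard, ?_⟩
      rintro m ⟨W', v', hLO', rfl⟩
      exact Set.ncard_le_ncard hLO'.2.1 hvfin
    have hle : W.ncard ≤ Gamma P := le_csSup hbdd ⟨W, v, hLO, rfl⟩
    rw [hGamma] at hle
    omega
  obtain ⟨Pairing, hPU, hPD, hPq, hPF, hPC⟩ :=
    pairing_of_nobig (InnerDiagonal P) hsym hirr (verts P).ncard (verts P) hvfin rfl hdeg hnb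
  refine ⟨?_, Pairing, hPU, hPD, fun q hq => by
    obtain ⟨u, v, _, _, hE, hq'⟩ := hPq q hq; exact ⟨u, v, hE, hq'⟩⟩
  -- the bound `2 * d ≤ f₀(P)`
  by_contra hlt
  push_neg at hlt
  have hk : Pairing.ncard < d := by omega
  choose! f1 f2 hm1 hm2 hEq hqeq using hPq
  set D : Set (Euc d) := (fun q => f1 q - f2 q) '' Pairing with hDdef
  have hDfin : D.Finite := hPF.image _
  have hrank : Module.finrank ℝ (Submodule.span ℝ D) < d := by
    have h1 : Module.finrank ℝ (Submodule.span ℝ (hDfin.toFinset : Set (Euc d)))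
        ≤ hDfin.toFinset.card := finrank_span_finset_le_card _
    rw [Set.Finite.coe_toFinset] at h1
    have h2 : hDfin.toFinset.card = D.ncard := (Set.ncard_eq_toFinset_card D hDfin).symm
    have h3 : D.ncard ≤ Pairing.ncard := Set.ncard_image_le hPF
    omega
  have hnetop : Submodule.span ℝ D ≠ ⊤ := by
    intro h
    rw [h, finrank_top, finrank_euclideanSpace_fin] at hrank
    omega
  have hbot : (Submodule.span ℝ D)ᗮ ≠ ⊥ := by
    rw [Ne, Submodule.orthogonal_eq_bot_iff]; exact hnetop
  obtain ⟨y, hyperp, hy0⟩ := Submodule.exists_mem_ne_zero_of_ne_bot hbot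
  have hyorth : ∀ q ∈ Pairing, ⟪y, f1 q - f2 q⟫ = 0 := by
    intro q hq
    exact (Submodule.mem_orthogonal' _ y).mp hyperp _ (Submodule.subset_span ⟨q, hq, rfl⟩)
  set φ : Euc d → ℝ := fun x => ⟪y, x⟫ with hφdef
  have hPconv : Convex ℝ P := hPV0 ▸ convex_convexHull ℝ V0
  have hPcomp : IsCompact P := hPV0 ▸ hV0fin.isCompact_convexHull ℝ
  have hPne : P.Nonempty := by
    by_contra h
    rw [Set.not_nonempty_iff_eq_empty] at h
    rw [h] at hspan
    have hbt : (⊥ : AffineSubspace ℝ (Euc d)) = ⊤ := by rw [← hspan]; simp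
    exact AffineSubspace.bot_ne_top ℝ (Euc d) (Euc d) hbt
  have hφcont : Continuous φ := Continuous.inner continuous_const continuous_id
  obtain ⟨a, haP, hamax⟩ := hPcomp.exists_isMaxOn hPne hφcont.continuousOn
  set F : Set (Euc d) := {x ∈ P | ∀ z ∈ P, φ z ≤ φ x} with hFdef
  have haF : a ∈ F := ⟨haP, fun z hz => hamax hz⟩
  have hexp : IsExposed ℝ P F := by
    intro _
    refine ⟨innerSL ℝ y, ?_⟩
    rfl
  have hFcomp : IsCompact F := hexp.isCompact hPcomp
  have hFconv : Convex ℝ F := hexp.convex hPconv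
  obtain ⟨b, hbF⟩ := hFcomp.extremePoints_nonempty ⟨a, haF⟩
  have hbP : b ∈ verts P := hexp.isExtreme.extremePoints_subset_extremePoints hbF
  have hbU : b ∈ ⋃₀ Pairing := by rw [hPU]; exact hbP
  obtain ⟨q, hq, hbq⟩ := hbU
  have hEq' := hEq q hq
  have hqeq' := hqeq q hq
  have hφeq : φ (f1 q) = φ (f2 q) := by
    have := hyorth q hq
    rw [inner_sub_right] at this
    simpa [hφdef] using sub_eq_zero.mp this
  have hbmax : ∀ z ∈ P, φ z ≤ φ b := hbF.1.2
  have hφb : φ (f1 q) = φ b := by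
    rw [hqeq'] at hbq
    rcases hbq with rfl | hb
    · rfl
    · rw [Set.mem_singleton_iff] at hb; subst hb; exact hφeq
  obtain ⟨s, hs_seg, hs_int⟩ := hEq'.2.2.2
  obtain ⟨ta, tb, hta, htb, htab, hseq⟩ := hs_seg
  have hφ2 : φ (f2 q) = φ b := by rw [← hφeq]; exact hφb
  have hφs : φ s = φ b := by
    rw [← hseq]
    have hlin : φ (ta • f1 q + tb • f2 q) = ta * φ (f1 q) + tb * φ (f2 q) := by
      simp only [hφdef]
      rw [inner_add_right, real_inner_smul_right, real_inner_smul_right]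
    rw [hlin, hφb, hφ2, ← add_mul, htab, one_mul]
  obtain ⟨ε, hε, hball⟩ := Metric.mem_nhds_iff.mp (mem_interior_iff_mem_nhds.mp hs_int)
  have hynorm : 0 < ‖y‖ := norm_pos_iff.mpr hy0
  set c : ℝ := ε / (2 * ‖y‖) with hcdef
  have hc : 0 < c := by positivity
  have hcy : c * ‖y‖ = ε / 2 := by
    rw [hcdef]
    field_simp
  have htP : s + c • y ∈ P := by
    apply hball
    rw [Metric.mem_ball, dist_eq_norm]
    have h3 : s + c • y - s = c • y := by abel
    rw [h3, norm_smul, Real.norm_eq_abs, abs_of_pos hc, hcy]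
    linarith
  have hle : φ (s + c • y) ≤ φ b := hbmax _ htP
  have heq : φ (s + c • y) = φ s + c * ‖y‖ ^ 2 := by
    simp only [hφdef, inner_add_right, real_inner_smul_right, real_inner_self_eq_norm_sq]
  nlinarith [hle, heq, hφs, mul_pos hc (pow_pos hynorm 2)]
end
end

section
/- Let P = conv(V) be a d-polytope with finite vertex set V, let F be a facet of P with supporting inequality ⟨a,x⟩ ≤ b (so ⟨a,x⟩ ≤ b holds on P and F = P ∩ {x : ⟨a,x⟩ = b}), and let x₀ ∈ ℝ^d be a point beyond F and beneath all other facets, i.e., ⟨a,x₀⟩ > b while x₀ strictly satisfies the supporting inequality of every other facet of P. Then for every vertex v of P with v ∉ F, the segment [x₀, v] is an inner diagonal of the stacked polytope conv(V ∪ {x₀}). -/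
open scoped InnerProductSpace

noncomputable section

section StackingHelpers

open Real

variable {d : ℕ}

private lemma inner_le_of_mem_hull {S : Set (Euc d)} {e : Euc d} {r : ℝ}
    (hS : ∀ w ∈ S, ⟪e, w⟫_ℝ ≤ r) {x : Euc d} (hx : x ∈ convexHull ℝ S) :
    ⟪e, x⟫_ℝ ≤ r := by
  have hlin : IsLinearMap ℝ (fun y : Euc d => ⟪e, y⟫_ℝ) :=
    ⟨fun x y => inner_add_right e x y, fun t y => by
      rw [smul_eq_mul]; exact real_inner_smul_right e y t⟩
  exact convexHull_min hS (convex_halfSpace_le hlin r) hx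

private lemma mem_hull_face {S : Set (Euc d)} {e : Euc d} {r : ℝ}
    (hS : ∀ w ∈ S, ⟪e, w⟫_ℝ ≤ r) {x : Euc d} (hx : x ∈ convexHull ℝ S)
    (hxe : ⟪e, x⟫_ℝ = r) : x ∈ convexHull ℝ (S ∩ {z | ⟪e, z⟫_ℝ = r}) := by
  classical
  rw [convexHull_eq] at hx
  obtain ⟨ι, t, w, z, hw0, hw1, hz, hcm⟩ := hx
  have hsum : t.centerMass w z = ∑ i ∈ t, w i • z i := Finset.centerMass_eq_of_sum_1 _ _ hw1
  have hinner : ∑ i ∈ t, w i * ⟪e, z i⟫_ℝ = r := by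
    rw [← hxe, ← hcm, hsum, inner_sum]
    exact Finset.sum_congr rfl fun i _ => (real_inner_smul_right _ _ _).symm
  have hzero : ∀ i ∈ t, w i * (r - ⟪e, z i⟫_ℝ) = 0 := by
    have hnn : ∀ i ∈ t, 0 ≤ w i * (r - ⟪e, z i⟫_ℝ) := fun i hi =>
      mul_nonneg (hw0 i hi) (sub_nonneg.2 (hS _ (hz i hi)))
    have hsum0 : ∑ i ∈ t, w i * (r - ⟪e, z i⟫_ℝ) = 0 := by
      have expand : ∀ i ∈ t, w i * (r - ⟪e, z i⟫_ℝ) = w i * r - w i * ⟪e, z i⟫_ℝ :=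
        fun i _ => mul_sub _ _ _
      rw [Finset.sum_congr rfl expand, Finset.sum_sub_distrib, ← Finset.sum_mul, hw1, hinner]
      ring
    exact (Finset.sum_eq_zero_iff_of_nonneg hnn).1 hsum0
  rw [← Finset.centerMass_filter_ne_zero (z := z)] at hcm
  rw [← hcm]
  refine Finset.centerMass_mem_convexHull _ (fun i hi => hw0 i (Finset.mem_filter.1 hi).1) ?_ ?_
  · have : ∑ i ∈ t with w i ≠ 0, w i = ∑ i ∈ t, w i := Finset.sum_filter_ne_zero t
    rw [this, hw1]; exact one_pos
  · intro i hi
    obtain ⟨hit, hwne⟩ := Finset.mem_filter.1 hi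
    refine ⟨hz i hit, ?_⟩
    have h0 := hzero i hit
    have : r - ⟪e, z i⟫_ℝ = 0 := by
      rcases mul_eq_zero.1 h0 with h | h
      · exact absurd h hwne
      · exact h
    simp only [Set.mem_setOf_eq]
    linarith

private lemma extreme_of_unique_max {S : Set (Euc d)} {e x : Euc d}
    (hxS : x ∈ S) (hmax : ∀ w ∈ S, w ≠ x → ⟪e, w⟫_ℝ < ⟪e, x⟫_ℝ) :
    x ∈ Set.extremePoints ℝ (convexHull ℝ S) := by
  have hS : ∀ w ∈ S, ⟪e, w⟫_ℝ ≤ ⟪e, x⟫_ℝ := fun w hw => by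
    rcases eq_or_ne w x with rfl | h
    · exact le_rfl
    · exact (hmax w hw h).le
  refine ⟨subset_convexHull ℝ S hxS, fun x₁ hx₁ x₂ hx₂ hseg => ?_⟩
  obtain ⟨t₁, t₂, ht₁, ht₂, hsum, hcomb⟩ := hseg
  have h1 : ⟪e, x₁⟫_ℝ ≤ ⟪e, x⟫_ℝ := inner_le_of_mem_hull hS hx₁
  have h2 : ⟪e, x₂⟫_ℝ ≤ ⟪e, x⟫_ℝ := inner_le_of_mem_hull hS hx₂
  have hx' : t₁ * ⟪e, x₁⟫_ℝ + t₂ * ⟪e, x₂⟫_ℝ = ⟪e, x⟫_ℝ := by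
    rw [← hcomb, inner_add_right, real_inner_smul_right, real_inner_smul_right]
  have h3 : t₁ * ⟪e, x⟫_ℝ + t₂ * ⟪e, x⟫_ℝ = ⟪e, x⟫_ℝ := by
    rw [← add_mul, hsum, one_mul]
  have e1 : ⟪e, x₁⟫_ℝ = ⟪e, x⟫_ℝ := by
    by_contra hne
    have hlt := lt_of_le_of_ne h1 hne
    nlinarith [mul_pos ht₁ (sub_pos.2 hlt), mul_nonneg ht₂.le (sub_nonneg.2 h2)]
  have e2 : ⟪e, x₂⟫_ℝ = ⟪e, x⟫_ℝ := by
    by_contra hne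
    have hlt := lt_of_le_of_ne h2 hne
    nlinarith [mul_pos ht₂ (sub_pos.2 hlt), mul_nonneg ht₁.le (sub_nonneg.2 h1)]
  have hsub : S ∩ {z | ⟪e, z⟫_ℝ = ⟪e, x⟫_ℝ} ⊆ {x} := by
    rintro w ⟨hwS, hwe⟩
    by_contra hne
    exact absurd hwe (ne_of_lt (hmax w hwS hne))
  have key : ∀ y, y ∈ convexHull ℝ S → ⟪e, y⟫_ℝ = ⟪e, x⟫_ℝ → y = x := by
    intro y hy hye
    have := convexHull_mono hsub (mem_hull_face hS hy hye)
    simpa using this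
  exact key x₁ hx₁ e1

private lemma rot_sublemma {ι : Type} (W : Finset ι) (p q : ι → ℝ)
    (hp : ∀ i ∈ W, p i ≤ 0) (hq : ∀ i ∈ W, p i = 0 → q i = 0) :
    ∃ α, (0 < α ∧ α ≤ π) ∧
      (∀ θ, 0 ≤ θ → θ ≤ α → ∀ i ∈ W, p i * Real.cos θ + q i * Real.sin θ ≤ 0) ∧
      (α = π ∨ ∃ i ∈ W, p i * Real.cos α + q i * Real.sin α = 0 ∧
        ¬(p i = 0 ∧ q i = 0)) := by
  classical
  set f : ι → ℝ → ℝ := fun i θ => p i * Real.cos θ + q i * Real.sin θ with hf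
  have hfc : ∀ i, Continuous (f i) := fun i =>
    (continuous_const.mul Real.continuous_cos).add (continuous_const.mul Real.continuous_sin)
  rcases W.eq_empty_or_nonempty with rfl | hW
  · exact ⟨π, ⟨Real.pi_pos, le_rfl⟩, by simp, Or.inl rfl⟩
  have Hsmall : ∀ i ∈ W, ∃ δ > (0:ℝ), ∀ θ, 0 ≤ θ → θ ≤ δ → f i θ ≤ 0 := by
    intro i hi
    rcases eq_or_lt_of_le (hp i hi) with hp0 | hplt
    · refine ⟨1, one_pos, fun θ _ _ => ?_⟩
      have hq0 := hq i hi hp0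
      simp [hf, hp0, hq0]
    · have hopen : IsOpen {θ : ℝ | f i θ < 0} := isOpen_lt (hfc i) continuous_const
      have h0 : (0:ℝ) ∈ {θ : ℝ | f i θ < 0} := by simpa [hf] using hplt
      obtain ⟨ε, hε, hball⟩ := Metric.isOpen_iff.1 hopen 0 h0
      refine ⟨ε/2, by linarith, fun θ h0θ hθ => ?_⟩
      have hmem : θ ∈ Metric.ball (0:ℝ) ε := by
        rw [Metric.mem_ball, Real.dist_eq]
        rw [sub_zero, abs_of_nonneg h0θ]
        linarith
      exact (hball hmem).le
  choose! δ hδpos hδ using Hsmall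
  set ε := min (W.inf' hW δ) π with hε
  have hεpos : 0 < ε := lt_min (by rw [Finset.lt_inf'_iff]; exact fun i hi => hδpos i hi) Real.pi_pos
  set I : Set ℝ := {θ | (0 ≤ θ ∧ θ ≤ π) ∧ ∀ θ', 0 ≤ θ' → θ' ≤ θ → ∀ i ∈ W, f i θ' ≤ 0} with hI
  have hεI : ε ∈ I := by
    refine ⟨⟨hεpos.le, min_le_right _ _⟩, fun θ' h0 hθ' i hi => ?_⟩
    exact hδ i hi θ' h0 (le_trans hθ' (le_trans (min_le_left _ _) (Finset.inf'_le δ hi)))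
  have hbdd : BddAbove I := ⟨π, fun θ hθ => hθ.1.2⟩
  set α := sSup I with hα
  have hεα : ε ≤ α := le_csSup hbdd hεI
  have hαpi : α ≤ π := csSup_le ⟨ε, hεI⟩ fun θ hθ => hθ.1.2
  have hα0 : 0 < α := lt_of_lt_of_le hεpos hεα
  have hsupport : ∀ θ', 0 ≤ θ' → θ' ≤ α → ∀ i ∈ W, f i θ' ≤ 0 := by
    intro θ' h0 hθα i hi
    by_contra hpos
    push_neg at hpos
    rcases eq_or_lt_of_le h0 with heq | h0'
    · have : f i 0 ≤ 0 := by simpa [hf] using hp i hi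
      rw [← heq] at hpos; linarith
    · have hopen : IsOpen {θ : ℝ | 0 < f i θ} := isOpen_lt continuous_const (hfc i)
      obtain ⟨r, hr, hball⟩ := Metric.isOpen_iff.1 hopen θ' hpos
      have hr'p : 0 < min (r/2) θ' := lt_min (by linarith) h0'
      obtain ⟨τ, hτI, hττ⟩ := exists_lt_of_lt_csSup ⟨ε, hεI⟩
        (show θ' - min (r/2) θ' < α by linarith)
      by_cases hcase : θ' ≤ τ
      · exact absurd (hτI.2 θ' h0 hcase i hi) (not_le.2 hpos)
      · push_neg at hcase
        have hτb : τ ∈ Metric.ball θ' r := by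
          rw [Metric.mem_ball, Real.dist_eq, abs_sub_lt_iff]
          have h1 := min_le_left (r/2) θ'
          constructor <;> linarith
        have hfτ := hball hτb
        exact absurd (hτI.2 τ hτI.1.1 le_rfl i hi) (not_le.2 hfτ)
  by_cases hαπ : α = π
  · exact ⟨α, ⟨hα0, hαpi⟩, hsupport, Or.inl hαπ⟩
  have hαlt : α < π := lt_of_le_of_ne hαpi hαπ
  by_cases htie : ∃ i ∈ W, f i α = 0 ∧ ¬(p i = 0 ∧ q i = 0)
  · exact ⟨α, ⟨hα0, hαpi⟩, hsupport, Or.inr htie⟩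
  exfalso
  push_neg at htie
  have Hext : ∀ i ∈ W, ∃ δ > (0:ℝ), ∀ θ, α ≤ θ → θ ≤ α + δ → f i θ ≤ 0 := by
    intro i hi
    by_cases h0 : f i α = 0
    · obtain ⟨hp0, hq0⟩ := htie i hi h0
      exact ⟨1, one_pos, fun θ _ _ => by simp [hf, hp0, hq0]⟩
    · have hneg : f i α < 0 := lt_of_le_of_ne (hsupport α hα0.le le_rfl i hi) h0
      obtain ⟨r, hr, hball⟩ := Metric.isOpen_iff.1 (isOpen_lt (hfc i) continuous_const) α hneg
      refine ⟨r/2, by linarith, fun θ h1 h2 => ?_⟩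
      have : θ ∈ Metric.ball α r := by
        rw [Metric.mem_ball, Real.dist_eq, abs_sub_lt_iff]
        constructor <;> linarith
      exact (hball this).le
  choose! δ₂ hδ₂pos hδ₂ using Hext
  set ε₂ := min (W.inf' hW δ₂) (π - α) with hε₂
  have hε₂pos : 0 < ε₂ :=
    lt_min (by rw [Finset.lt_inf'_iff]; exact fun i hi => hδ₂pos i hi) (by linarith)
  have hmem : α + ε₂ ∈ I := by
    refine ⟨⟨by linarith, ?_⟩, fun θ' h0 hθ' i hi => ?_⟩
    · have := min_le_right (W.inf' hW δ₂) (π - α); linarith [hε₂ ▸ this]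
    · by_cases hc : θ' ≤ α
      · exact hsupport θ' h0 hc i hi
      · push_neg at hc
        refine hδ₂ i hi θ' hc.le (le_trans hθ' ?_)
        have := le_trans (min_le_left (W.inf' hW δ₂) (π - α)) (Finset.inf'_le δ₂ hi)
        linarith [hε₂ ▸ this]
  have := le_csSup hbdd hmem
  linarith

private lemma vectorSpan_face_le {P : Set (Euc d)} {c : Euc d} {β : ℝ} :
    vectorSpan ℝ {x ∈ P | ⟪c, x⟫_ℝ = β} ≤ (ℝ ∙ c)ᗮ := by
  rw [vectorSpan_def, Submodule.span_le]
  rintro v hv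
  rw [Set.mem_vsub] at hv
  obtain ⟨x, hx, y, hy, rfl⟩ := hv
  rw [SetLike.mem_coe, Submodule.mem_orthogonal_singleton_iff_inner_right]
  rw [vsub_eq_sub, inner_sub_right, hx.2, hy.2, sub_self]

private lemma lemmaL_base {P F : Set (Euc d)} {x₀ : Euc d}
    (hbeneath : ∀ (F' : Set (Euc d)) (a' : Euc d) (b' : ℝ),
      IsFacetOf P F' → F' ≠ F → (∀ x ∈ P, ⟪a', x⟫_ℝ ≤ b') →
      F' = {x ∈ P | ⟪a', x⟫_ℝ = b'} → ⟪a', x₀⟫_ℝ < b')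
    (c : Euc d) (β : ℝ) (hc : c ≠ 0) (hval : ∀ x ∈ P, ⟪c, x⟫_ℝ ≤ β)
    (g : Euc d) (hg : g ∈ P) (hgβ : ⟪c, g⟫_ℝ = β) (hgF : g ∉ F) (hx₀ : β ≤ ⟪c, x₀⟫_ℝ)
    (hk : d - 1 ≤ Module.finrank ℝ (vectorSpan ℝ {x ∈ P | ⟪c, x⟫_ℝ = β})) : False := by
  set G := {x ∈ P | ⟪c, x⟫_ℝ = β} with hG
  have hdim : Module.finrank ℝ (vectorSpan ℝ G) ≤ d - 1 := by
    have h1 := Submodule.finrank_add_finrank_orthogonal (K := (ℝ ∙ c))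
    rw [finrank_span_singleton hc] at h1
    have h2 : Module.finrank ℝ (Euc d) = d := finrank_euclideanSpace_fin
    have h3 := Submodule.finrank_mono (vectorSpan_face_le (P := P) (c := c) (β := β))
    rw [← hG] at h3
    omega
  have hkeq : Module.finrank ℝ (affineSpan ℝ G).direction = d - 1 := by
    rw [direction_affineSpan]; omega
  have hexp : IsExposed ℝ P G := by
    intro _
    refine ⟨innerSL ℝ c, ?_⟩
    ext x
    simp only [hG, Set.mem_setOf_eq, innerSL_apply_apply]
    constructor
    · rintro ⟨hxP, hxβ⟩
      exact ⟨hxP, fun y hy => by rw [hxβ]; exact hval y hy⟩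
    · rintro ⟨hxP, hxmax⟩
      refine ⟨hxP, le_antisymm (hval x hxP) ?_⟩
      rw [← hgβ]; exact hxmax g hg
  have hGF : G ≠ F := fun h => hgF (h ▸ ⟨hg, hgβ⟩)
  have := hbeneath G c β ⟨hexp, hkeq⟩ hGF hval rfl
  linarith

private lemma lemmaL_side {P F : Set (Euc d)} {V : Set (Euc d)} {x₀ : Euc d} {n : ℕ}
    (hPV : P = convexHull ℝ V)
    (IH : ∀ (c : Euc d) (β : ℝ), c ≠ 0 → (∀ x ∈ P, ⟪c, x⟫_ℝ ≤ β) →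
      ∀ g ∈ P, ⟪c, g⟫_ℝ = β → g ∉ F → β ≤ ⟪c, x₀⟫_ℝ →
      d - 1 - Module.finrank ℝ (vectorSpan ℝ {x ∈ P | ⟪c, x⟫_ℝ = β}) ≤ n → False)
    (c : Euc d) (β : ℝ) (g : Euc d) (hg : g ∈ P) (hgβ : ⟪c, g⟫_ℝ = β) (hgF : g ∉ F)
    (hklt : Module.finrank ℝ (vectorSpan ℝ {x ∈ P | ⟪c, x⟫_ℝ = β}) < d - 1)
    (hmeas : d - 1 - Module.finrank ℝ (vectorSpan ℝ {x ∈ P | ⟪c, x⟫_ℝ = β}) ≤ n + 1)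
    (u : Euc d) (hu0 : u ≠ 0) (huc : ⟪u, c⟫_ℝ = 0)
    (huV : ∀ w ∈ vectorSpan ℝ {x ∈ P | ⟪c, x⟫_ℝ = β}, ⟪u, w⟫_ℝ = 0)
    (α : ℝ) (hα0 : 0 < α) (hαπ : α < π)
    (hsupα : ∀ w ∈ V, (⟪c, w⟫_ℝ - β) * Real.cos α + (⟪u, w⟫_ℝ - ⟪u, g⟫_ℝ) * Real.sin α ≤ 0)
    (w₁ : Euc d) (hw₁V : w₁ ∈ V)
    (hw₁tie : (⟪c, w₁⟫_ℝ - β) * Real.cos α + (⟪u, w₁⟫_ℝ - ⟪u, g⟫_ℝ) * Real.sin α = 0)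
    (hw₁nz : ¬(⟪c, w₁⟫_ℝ - β = 0 ∧ ⟪u, w₁⟫_ℝ - ⟪u, g⟫_ℝ = 0)) :
    (⟪c, x₀⟫_ℝ - β) * Real.cos α + (⟪u, x₀⟫_ℝ - ⟪u, g⟫_ℝ) * Real.sin α < 0 := by
  by_contra hcon
  push_neg at hcon
  set G := {x ∈ P | ⟪c, x⟫_ℝ = β} with hG
  set γ := ⟪u, g⟫_ℝ with hγ
  set cα := Real.cos α • c + Real.sin α • u with hcα
  set βα := Real.cos α * β + Real.sin α * γ with hβα
  have hexp : ∀ x : Euc d, ⟪cα, x⟫_ℝ = Real.cos α * ⟪c, x⟫_ℝ + Real.sin α * ⟪u, x⟫_ℝ := by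
    intro x; rw [hcα, inner_add_left, real_inner_smul_left, real_inner_smul_left]
  have hval : ∀ x ∈ P, ⟪cα, x⟫_ℝ ≤ βα := by
    intro x hx
    refine inner_le_of_mem_hull (fun w hw => ?_) (hPV ▸ hx)
    have h := hsupα w hw
    have hid : ⟪cα, w⟫_ℝ - βα
        = (⟪c, w⟫_ℝ - β) * Real.cos α + (⟪u, w⟫_ℝ - γ) * Real.sin α := by
      rw [hexp, hβα]; ring
    linarith
  have hsin : 0 < Real.sin α := Real.sin_pos_of_pos_of_lt_pi hα0 hαπ
  have hcα0 : cα ≠ 0 := by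
    intro h
    have h2 : ⟪u, cα⟫_ℝ = Real.sin α * ⟪u, u⟫_ℝ := by
      rw [hcα, inner_add_right, real_inner_smul_right, real_inner_smul_right, huc]
      ring
    rw [h, inner_zero_right] at h2
    have h3 : 0 < ⟪u, u⟫_ℝ := by
      rw [real_inner_self_eq_norm_sq]
      exact pow_pos (norm_pos_iff.2 hu0) 2
    nlinarith
  have hgβα : ⟪cα, g⟫_ℝ = βα := by rw [hexp, hgβ, hβα, hγ]
  have hgG : g ∈ G := ⟨hg, hgβ⟩
  have hGsub : ∀ x ∈ G, ⟪cα, x⟫_ℝ = βα := by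
    intro x hx
    have h1 : ⟪u, x - g⟫_ℝ = 0 := by
      refine huV _ ?_
      have := vsub_mem_vectorSpan ℝ hx hgG
      rwa [vsub_eq_sub] at this
    rw [inner_sub_right] at h1
    have h2 : ⟪u, x⟫_ℝ = γ := by rw [hγ]; linarith
    rw [hexp, hx.2, h2, hβα]
  have hw₁P : w₁ ∈ P := hPV ▸ subset_convexHull ℝ V hw₁V
  have hw₁Gα : ⟪cα, w₁⟫_ℝ = βα := by
    have hid : ⟪cα, w₁⟫_ℝ - βα
        = (⟪c, w₁⟫_ℝ - β) * Real.cos α + (⟪u, w₁⟫_ℝ - γ) * Real.sin α := by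
      rw [hexp, hβα]; ring
    linarith [hw₁tie]
  have hw₁nmem : w₁ ∉ affineSpan ℝ G := by
    intro hmem
    have hv : w₁ -ᵥ g ∈ vectorSpan ℝ G := by
      rw [← direction_affineSpan]
      exact AffineSubspace.vsub_mem_direction hmem (subset_affineSpan ℝ G hgG)
    have h1 : ⟪u, w₁ - g⟫_ℝ = 0 := huV _ (by rwa [vsub_eq_sub] at hv)
    have h2 : ⟪c, w₁ - g⟫_ℝ = 0 := by
      have h3 : w₁ - g ∈ (ℝ ∙ c)ᗮ := vectorSpan_face_le (by rwa [vsub_eq_sub] at hv)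
      have := Submodule.mem_orthogonal_singleton_iff_inner_right.1 h3
      exact this
    rw [inner_sub_right] at h1 h2
    exact hw₁nz ⟨by linarith, by linarith⟩
  have hlt : vectorSpan ℝ G < (affineSpan ℝ (insert w₁ G)).direction := by
    rw [SetLike.lt_iff_le_and_exists]
    constructor
    · rw [← direction_affineSpan]
      exact AffineSubspace.direction_le (affineSpan_mono ℝ (Set.subset_insert _ _))
    · refine ⟨w₁ -ᵥ g, ?_, ?_⟩
      · exact AffineSubspace.vsub_mem_direction
          (subset_affineSpan ℝ _ (Set.mem_insert _ _))
          (subset_affineSpan ℝ _ (Set.mem_insert_of_mem _ hgG))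
      · intro hvmem
        refine hw₁nmem ?_
        have := AffineSubspace.vadd_mem_of_mem_direction
          (by rwa [direction_affineSpan]) (subset_affineSpan ℝ G hgG)
        simpa using this
  have hins : insert w₁ G ⊆ {x ∈ P | ⟪cα, x⟫_ℝ = βα} := by
    refine Set.insert_subset ⟨hw₁P, hw₁Gα⟩ fun x hx => ⟨hx.1, hGsub x hx⟩
  have hrank : Module.finrank ℝ (vectorSpan ℝ G)
      < Module.finrank ℝ (vectorSpan ℝ {x ∈ P | ⟪cα, x⟫_ℝ = βα}) := by
    have h1 := Submodule.finrank_lt_finrank_of_lt hlt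
    have h2 : Module.finrank ℝ ((affineSpan ℝ (insert w₁ G)).direction)
        ≤ Module.finrank ℝ (vectorSpan ℝ {x ∈ P | ⟪cα, x⟫_ℝ = βα}) := by
      rw [← direction_affineSpan]
      exact Submodule.finrank_mono (AffineSubspace.direction_le (affineSpan_mono ℝ hins))
    omega
  have hx₀' : βα ≤ ⟪cα, x₀⟫_ℝ := by
    have hid : ⟪cα, x₀⟫_ℝ - βα
        = (⟪c, x₀⟫_ℝ - β) * Real.cos α + (⟪u, x₀⟫_ℝ - γ) * Real.sin α := by
      rw [hexp, hβα]; ring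
    linarith
  exact IH cα βα hcα0 hval g hg hgβα hgF hx₀' (by omega)

set_option maxHeartbeats 1000000 in
private lemma lemmaL {V P F : Set (Euc d)} {x₀ : Euc d} (hVfin : V.Finite)
    (hPV : P = convexHull ℝ V) (hfull : affineSpan ℝ P = ⊤)
    (hbeneath : ∀ (F' : Set (Euc d)) (a' : Euc d) (b' : ℝ),
      IsFacetOf P F' → F' ≠ F → (∀ x ∈ P, ⟪a', x⟫_ℝ ≤ b') →
      F' = {x ∈ P | ⟪a', x⟫_ℝ = b'} → ⟪a', x₀⟫_ℝ < b') :
    ∀ (c : Euc d) (β : ℝ), c ≠ 0 → (∀ x ∈ P, ⟪c, x⟫_ℝ ≤ β) →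
      ∀ g ∈ P, ⟪c, g⟫_ℝ = β → g ∉ F → β ≤ ⟪c, x₀⟫_ℝ → False := by
  suffices H : ∀ n : ℕ, ∀ (c : Euc d) (β : ℝ), c ≠ 0 → (∀ x ∈ P, ⟪c, x⟫_ℝ ≤ β) →
      ∀ g ∈ P, ⟪c, g⟫_ℝ = β → g ∉ F → β ≤ ⟪c, x₀⟫_ℝ →
      d - 1 - Module.finrank ℝ (vectorSpan ℝ {x ∈ P | ⟪c, x⟫_ℝ = β}) ≤ n → False by
    intro c β h1 h2 g h3 h4 h5 h6
    exact H _ c β h1 h2 g h3 h4 h5 h6 le_rfl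
  intro n
  induction n with
  | zero =>
    intro c β hc hval g hg hgβ hgF hx₀ hmeas
    refine lemmaL_base hbeneath c β hc hval g hg hgβ hgF hx₀ ?_
    omega
  | succ n IH =>
    intro c β hc hval g hg hgβ hgF hx₀ hmeas
    by_cases hkk : d - 1 ≤ Module.finrank ℝ (vectorSpan ℝ {x ∈ P | ⟪c, x⟫_ℝ = β})
    · exact lemmaL_base hbeneath c β hc hval g hg hgβ hgF hx₀ hkk
    push_neg at hkk
    have hNne : Submodule.span ℝ {c} ⊔ vectorSpan ℝ {x ∈ P | ⟪c, x⟫_ℝ = β} ≠ ⊤ := by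
      intro htop
      have h1 := Submodule.finrank_sup_add_finrank_inf_eq (Submodule.span ℝ {c})
        (vectorSpan ℝ {x ∈ P | ⟪c, x⟫_ℝ = β})
      rw [htop, finrank_top, finrank_span_singleton hc] at h1
      have h2 : Module.finrank ℝ (Euc d) = d := finrank_euclideanSpace_fin
      have h3 : Module.finrank ℝ
          (Submodule.span ℝ {c} ⊓ vectorSpan ℝ {x ∈ P | ⟪c, x⟫_ℝ = β} :
            Submodule ℝ (Euc d)) ≤ 1 := by
        calc _ ≤ Module.finrank ℝ (Submodule.span ℝ {c}) := Submodule.finrank_mono inf_le_left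
          _ = 1 := finrank_span_singleton hc
      omega
    have hbot : (Submodule.span ℝ {c} ⊔ vectorSpan ℝ {x ∈ P | ⟪c, x⟫_ℝ = β})ᗮ ≠ ⊥ :=
      fun h => hNne (Submodule.orthogonal_eq_bot_iff.1 h)
    obtain ⟨u, huN, hu0⟩ := Submodule.exists_mem_ne_zero_of_ne_bot hbot
    have horthall : ∀ x ∈ Submodule.span ℝ {c} ⊔ vectorSpan ℝ {x ∈ P | ⟪c, x⟫_ℝ = β},
        ⟪x, u⟫_ℝ = 0 := (Submodule.mem_orthogonal _ u).1 huN
    have huc : ⟪u, c⟫_ℝ = 0 := by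
      rw [real_inner_comm]
      exact horthall c (Submodule.mem_sup_left (Submodule.mem_span_singleton_self c))
    have huV : ∀ w ∈ vectorSpan ℝ {x ∈ P | ⟪c, x⟫_ℝ = β}, ⟪u, w⟫_ℝ = 0 := fun w hw => by
      rw [real_inner_comm]; exact horthall w (Submodule.mem_sup_right hw)
    have hgG : g ∈ {x ∈ P | ⟪c, x⟫_ℝ = β} := ⟨hg, hgβ⟩
    have hVP : V ⊆ P := hPV ▸ subset_convexHull ℝ V
    have hqzero : ∀ i ∈ hVfin.toFinset, ⟪c, i⟫_ℝ - β = 0 → ⟪u, i⟫_ℝ - ⟪u, g⟫_ℝ = 0 := by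
      intro i hi hp0
      have hiG : i ∈ {x ∈ P | ⟪c, x⟫_ℝ = β} :=
        ⟨hVP (hVfin.mem_toFinset.1 hi), by linarith⟩
      have h1 : ⟪u, i - g⟫_ℝ = 0 := by
        refine huV _ ?_
        have := vsub_mem_vectorSpan ℝ hiG hgG
        rwa [vsub_eq_sub] at this
      rw [inner_sub_right] at h1
      linarith
    have hpneg : ∀ i ∈ hVfin.toFinset, ⟪c, i⟫_ℝ - β ≤ 0 := fun i hi =>
      sub_nonpos.2 (hval _ (hVP (hVfin.mem_toFinset.1 hi)))
    obtain ⟨α, ⟨hα0, hαπ'⟩, hsupp, halt⟩ := rot_sublemma hVfin.toFinset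
      (fun i => ⟪c, i⟫_ℝ - β) (fun i => ⟪u, i⟫_ℝ - ⟪u, g⟫_ℝ) hpneg hqzero
    obtain ⟨α', ⟨hα'0, hα'π⟩, hsupp', halt'⟩ := rot_sublemma hVfin.toFinset
      (fun i => ⟪c, i⟫_ℝ - β) (fun i => -(⟪u, i⟫_ℝ - ⟪u, g⟫_ℝ)) hpneg
      (fun i hi h => by
        show -(⟪u, i⟫_ℝ - ⟪u, g⟫_ℝ) = 0
        rw [hqzero i hi h]; ring)
    by_cases hbig : π < α + α'
    · -- the arc of support has length > π : P degenerate, contradiction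
      have hall : ∀ i ∈ hVfin.toFinset, ⟪c, i⟫_ℝ - β = 0 := by
        intro i hiW
        have hθE : ∀ θ, 0 ≤ θ → θ ≤ α → π - θ ≤ α' →
            (⟪c, i⟫_ℝ - β) * Real.cos θ + (⟪u, i⟫_ℝ - ⟪u, g⟫_ℝ) * Real.sin θ = 0 := by
          intro θ h1 h2 h3
          have hle := hsupp θ h1 h2 i hiW
          have hge := hsupp' (π - θ) (by linarith) h3 i hiW
          rw [Real.cos_pi_sub, Real.sin_pi_sub] at hge
          try simp only at hle hge ⊢
          nlinarith [hle, hge]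
        have hθ₁ := hθE (π - α') (by linarith) (by linarith) (by linarith)
        have hθ₂ := hθE ((π - α' + α)/2) (by linarith) (by linarith) (by linarith)
        have hsin : 0 < Real.sin ((π - α' + α)/2 - (π - α')) :=
          Real.sin_pos_of_pos_of_lt_pi (by linarith) (by linarith [Real.pi_pos])
        have hp : (⟪c, i⟫_ℝ - β) * Real.sin ((π - α' + α)/2 - (π - α')) = 0 := by
          rw [Real.sin_sub]
          linear_combination Real.sin ((π - α' + α)/2) * hθ₁ - Real.sin (π - α') * hθ₂
        rcases mul_eq_zero.1 hp with h | h
        · exact h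
        · exact absurd h (ne_of_gt hsin)
      have hsub : affineSpan ℝ P ≤ AffineSubspace.mk' g ((ℝ ∙ c)ᗮ) := by
        rw [hPV, affineSpan_convexHull]
        refine affineSpan_le.2 fun x hx => ?_
        rw [SetLike.mem_coe, AffineSubspace.mem_mk',
          Submodule.mem_orthogonal_singleton_iff_inner_right, vsub_eq_sub, inner_sub_right]
        have := hall x (hVfin.mem_toFinset.2 hx)
        linarith
      have hcc : c + g ∈ affineSpan ℝ P := by rw [hfull]; trivial
      have hmem : c + g ∈ AffineSubspace.mk' g ((ℝ ∙ c)ᗮ) := hsub hcc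
      rw [AffineSubspace.mem_mk',
        Submodule.mem_orthogonal_singleton_iff_inner_right] at hmem
      have hcc2 : ⟪c, c⟫_ℝ = 0 := by
        have h2 : (c + g) -ᵥ g = c := by rw [vsub_eq_sub]; abel
        rwa [h2] at hmem
      exact hc (inner_self_eq_zero.1 hcc2)
    push_neg at hbig
    have hαlt : α < π := by linarith
    have hα'lt : α' < π := by linarith
    rcases halt with h | ⟨w₁, hw₁W, hw₁tie, hw₁nz⟩
    · exact absurd h (by intro hh; rw [hh] at hαlt; exact lt_irrefl _ hαlt)
    rcases halt' with h | ⟨w₂, hw₂W, hw₂tie, hw₂nz⟩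
    · exact absurd h (by intro hh; rw [hh] at hα'lt; exact lt_irrefl _ hα'lt)

    have hA := lemmaL_side hPV IH c β g hg hgβ hgF hkk hmeas u hu0 huc huV α hα0 hαlt
      (fun w hw => hsupp α hα0.le le_rfl w (hVfin.mem_toFinset.2 hw))
      w₁ (hVfin.mem_toFinset.1 hw₁W) hw₁tie hw₁nz
    have hB := lemmaL_side hPV IH c β g hg hgβ hgF hkk hmeas (-u) (neg_ne_zero.2 hu0)
      (by rw [inner_neg_left, huc]; ring)
      (fun w hw => by rw [inner_neg_left, huV w hw]; ring)
      α' hα'0 hα'lt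
      (fun w hw => by
        have h := hsupp' α' hα'0.le le_rfl w (hVfin.mem_toFinset.2 hw)
        simp only [inner_neg_left] at h ⊢
        nlinarith [h])
      w₂ (hVfin.mem_toFinset.1 hw₂W)
      (by simp only [inner_neg_left]; nlinarith [hw₂tie])
      (by
        intro ⟨h1, h2⟩
        simp only [inner_neg_left] at h2
        exact hw₂nz ⟨h1, by linarith⟩)
    rw [inner_neg_left, inner_neg_left] at hB
    have hsa : 0 < Real.sin α := Real.sin_pos_of_pos_of_lt_pi hα0 hαlt
    have hsa' : 0 < Real.sin α' := Real.sin_pos_of_pos_of_lt_pi hα'0 hα'lt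
    have hsaa : 0 ≤ Real.sin (α + α') :=
      Real.sin_nonneg_of_nonneg_of_le_pi (by linarith) hbig
    have key : Real.sin α' * ((⟪c, x₀⟫_ℝ - β) * Real.cos α + (⟪u, x₀⟫_ℝ - ⟪u, g⟫_ℝ) * Real.sin α)
        + Real.sin α * ((⟪c, x₀⟫_ℝ - β) * Real.cos α'
          + (-⟪u, x₀⟫_ℝ - -⟪u, g⟫_ℝ) * Real.sin α')
        = (⟪c, x₀⟫_ℝ - β) * Real.sin (α + α') := by
      rw [Real.sin_add]; ring
    have t1 := mul_neg_of_pos_of_neg hsa' hA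
    have t2 := mul_neg_of_pos_of_neg hsa hB
    have t3 : 0 ≤ (⟪c, x₀⟫_ℝ - β) * Real.sin (α + α') :=
      mul_nonneg (by linarith) hsaa
    linarith

end StackingHelpers

/-- Let `P = conv V` be a `d`-polytope with vertex set `V`, let
`F` be a facet of `P` with supporting inequality `⟨a,x⟩ ≤ b`, and let `x₀` be
beyond `F` and beneath all other facets. Then for every vertex `v ∉ F` of `P`, the
segment `[x₀, v]` is an inner diagonal of the stacked polytope `conv (V ∪ {x₀})`. -/
theorem stacking_innerDiagonal {d : ℕ} (V : Set (Euc d)) (hVfin : V.Finite)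
    (P : Set (Euc d)) (hPV : P = convexHull ℝ V) (hfull : affineSpan ℝ P = ⊤)
    (hVvert : V = verts P)
    (F : Set (Euc d)) (hF : IsFacetOf P F)
    (a : Euc d) (b : ℝ)
    (hsupp : ∀ x ∈ P, ⟪a, x⟫_ℝ ≤ b)
    (hFeq : F = {x ∈ P | ⟪a, x⟫_ℝ = b})
    (x₀ : Euc d) (hbeyond : b < ⟪a, x₀⟫_ℝ)
    (hbeneath : ∀ (F' : Set (Euc d)) (a' : Euc d) (b' : ℝ),
      IsFacetOf P F' → F' ≠ F → (∀ x ∈ P, ⟪a', x⟫_ℝ ≤ b') →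
      F' = {x ∈ P | ⟪a', x⟫_ℝ = b'} → ⟪a', x₀⟫_ℝ < b') :
    ∀ v ∈ verts P, v ∉ F →
      InnerDiagonal (convexHull ℝ (V ∪ {x₀})) x₀ v := by
  intro v hv hvF
  classical
  have hPconv : Convex ℝ P := hPV ▸ convex_convexHull ℝ V
  have hvP : v ∈ P := hv.1
  have hVP : V ⊆ P := hPV ▸ subset_convexHull ℝ V
  have hav : ⟪a, v⟫_ℝ < b := by
    rcases lt_or_eq_of_le (hsupp v hvP) with h | h
    · exact h
    · exact absurd (show v ∈ F by rw [hFeq]; exact ⟨hvP, h⟩) hvF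
  set S := V ∪ {x₀} with hS
  set Q := convexHull ℝ S with hQ
  have hx₀S : x₀ ∈ S := Set.mem_union_right _ rfl
  have hx₀Q : x₀ ∈ Q := subset_convexHull ℝ S hx₀S
  have hPQ : P ⊆ Q := by rw [hPV, hQ]; exact convexHull_mono Set.subset_union_left
  have hx₀vert : x₀ ∈ Set.extremePoints ℝ Q := by
    refine extreme_of_unique_max (e := a) hx₀S fun w hw hne => ?_
    rcases hw with hwV | hwx
    · exact lt_of_le_of_lt (hsupp w (hVP hwV)) hbeyond
    · exact absurd hwx hne
  have hvx₀ : x₀ ≠ v := fun h => by rw [← h] at hav; linarith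
  have hvV : v ∈ V := by rw [hVvert]; exact hv
  rcases Set.eq_empty_or_nonempty (V \ {v}) with hVemp | hVne
  · exfalso
    have hVsub : V ⊆ {v} := by rwa [Set.diff_eq_empty] at hVemp
    have hPv : affineSpan ℝ P ≤ affineSpan ℝ ({v} : Set (Euc d)) := by
      rw [hPV, affineSpan_convexHull]
      exact affineSpan_mono ℝ hVsub
    rw [hfull] at hPv
    have hx₀v : x₀ = v :=
      (AffineSubspace.mem_affineSpan_singleton ℝ (Euc d)).1 (hPv trivial)
    rw [hx₀v] at hbeyond
    linarith
  obtain ⟨f, ub, hub1, hub2⟩ := geometric_hahn_banach_closed_point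
    (convex_convexHull ℝ (V \ {v}))
    (((hVfin.subset Set.diff_subset).isCompact_convexHull ℝ).isClosed)
    (show v ∉ convexHull ℝ (V \ {v}) by
      intro hmem
      have hconvd : Convex ℝ (P \ {v}) := (hPconv.mem_extremePoints_iff_convex_diff.1 hv).2
      have hsubd : convexHull ℝ (V \ {v}) ⊆ P \ {v} :=
        convexHull_min (fun w hw => ⟨hVP hw.1, hw.2⟩) hconvd
      exact (hsubd hmem).2 rfl)
  set c : Euc d := (InnerProductSpace.toDual ℝ (Euc d)).symm f with hc
  have hcf : ∀ x : Euc d, ⟪c, x⟫_ℝ = f x := fun x => InnerProductSpace.toDual_symm_apply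
  have hcw : ∀ w ∈ V, w ≠ v → ⟪c, w⟫_ℝ < ⟪c, v⟫_ℝ := by
    intro w hw hne
    rw [hcf, hcf]
    have := hub1 w (subset_convexHull ℝ _ ⟨hw, hne⟩)
    linarith
  have hcv_valid : ∀ x ∈ P, ⟪c, x⟫_ℝ ≤ ⟪c, v⟫_ℝ := by
    intro x hx
    refine inner_le_of_mem_hull (fun w hw => ?_) (hPV ▸ hx)
    rcases eq_or_ne w v with rfl | hne
    · exact le_rfl
    · exact (hcw w hw hne).le
  have hc0 : c ≠ 0 := by
    obtain ⟨w₀, hw₀⟩ := hVne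
    intro h
    have h1 := hcw w₀ hw₀.1 hw₀.2
    rw [h, inner_zero_left, inner_zero_left] at h1
    exact lt_irrefl _ h1
  have hcx₀ : ⟪c, x₀⟫_ℝ < ⟪c, v⟫_ℝ := by
    by_contra hge
    push_neg at hge
    exact lemmaL hVfin hPV hfull hbeneath c (⟪c, v⟫_ℝ) hc0 hcv_valid v hvP rfl hvF hge
  have hvvert : v ∈ Set.extremePoints ℝ Q := by
    refine extreme_of_unique_max (e := c) (Set.mem_union_left _ hvV) fun w hw hne => ?_
    rcases hw with hwV | hwx
    · exact hcw w hwV hne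
    · rw [Set.mem_singleton_iff.1 hwx]
      exact hcx₀
  -- the interior point of the diagonal
  set r := ⟪a, x₀⟫_ℝ with hr
  set t : ℝ := (r - b) / (r - ⟪a, v⟫_ℝ) with ht
  have hden : 0 < r - ⟪a, v⟫_ℝ := by rw [hr]; linarith
  have ht0 : 0 < t := div_pos (by rw [hr]; linarith) hden
  have ht1 : t < 1 := (div_lt_one hden).2 (by rw [hr]; linarith)
  set y := (1 - t) • x₀ + t • v with hy
  have hyseg : y ∈ openSegment ℝ x₀ v := ⟨1 - t, t, by linarith, ht0, by ring, rfl⟩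
  have hvQ : v ∈ Q := hPQ hvP
  have hyQ : y ∈ Q :=
    (convex_convexHull ℝ S) hx₀Q hvQ (by linarith) ht0.le (by ring)
  have hiP : (interior P).Nonempty := hPconv.interior_nonempty_iff_affineSpan_eq_top.2 hfull
  obtain ⟨p, hp⟩ := hiP
  have hpQ : p ∈ interior Q := interior_mono hPQ hp
  have hyint : y ∈ interior Q := by
    by_contra hnot
    obtain ⟨f₂, hf₂⟩ := geometric_hahn_banach_open_point
      (Convex.interior (convex_convexHull ℝ S)) isOpen_interior hnot
    set c₂ : Euc d := (InnerProductSpace.toDual ℝ (Euc d)).symm f₂ with hc₂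
    have hc₂f : ∀ x : Euc d, ⟪c₂, x⟫_ℝ = f₂ x := fun x => InnerProductSpace.toDual_symm_apply
    have hvalQ : ∀ x ∈ Q, f₂ x ≤ f₂ y := by
      intro x hx
      by_contra hgt
      push_neg at hgt
      have hpy : f₂ p < f₂ y := hf₂ p hpQ
      set s := (f₂ y - f₂ p) / (f₂ x - f₂ p) with hs
      have hd : 0 < f₂ x - f₂ p := by linarith
      have hs0 : 0 < s := div_pos (by linarith) hd
      have hs1 : s < 1 := (div_lt_one hd).2 (by linarith)
      have hmem : ((1 : ℝ) - (s + 1) / 2) • p + ((s + 1) / 2) • x ∈ interior Q :=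
        (convex_convexHull ℝ S).combo_interior_closure_mem_interior hpQ
          (subset_closure hx) (by linarith) (by linarith) (by ring)
      have hlt := hf₂ _ hmem
      rw [map_add, map_smul, map_smul] at hlt
      simp only [smul_eq_mul] at hlt
      have h2 : s * (f₂ x - f₂ p) = f₂ y - f₂ p := div_mul_cancel₀ _ (ne_of_gt hd)
      have h3 : s * (f₂ x - f₂ p) < ((s + 1) / 2) * (f₂ x - f₂ p) :=
        mul_lt_mul_of_pos_right (by linarith) hd
      nlinarith
    have hvq : f₂ v ≤ f₂ y := hvalQ v hvQ
    have hx₀q : f₂ x₀ ≤ f₂ y := hvalQ x₀ hx₀Q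
    have hyval : f₂ y = (1 - t) * f₂ x₀ + t * f₂ v := by
      rw [hy, map_add, map_smul, map_smul]; simp [smul_eq_mul]
    have h1 : (1 - t) * (f₂ y - f₂ x₀) + t * (f₂ y - f₂ v) = 0 := by
      linear_combination hyval
    have hA1 : 0 ≤ (1 - t) * (f₂ y - f₂ x₀) := mul_nonneg (by linarith) (by linarith)
    have hA2 : 0 ≤ t * (f₂ y - f₂ v) := mul_nonneg ht0.le (by linarith)
    have hveq : f₂ v = f₂ y := by
      have h2 : t * (f₂ y - f₂ v) = 0 := by linarith
      rcases mul_eq_zero.1 h2 with h | h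
      · linarith
      · linarith
    have hx₀eq : f₂ x₀ = f₂ y := by
      have h2 : (1 - t) * (f₂ y - f₂ x₀) = 0 := by linarith
      rcases mul_eq_zero.1 h2 with h | h
      · linarith
      · linarith
    have hc₂0 : c₂ ≠ 0 := by
      intro h
      have hcontr := hf₂ p hpQ
      rw [← hc₂f, ← hc₂f, h, inner_zero_left, inner_zero_left] at hcontr
      exact lt_irrefl _ hcontr
    refine lemmaL hVfin hPV hfull hbeneath c₂ (f₂ y) hc₂0 ?_ v hvP ?_ hvF ?_
    · intro x hx; rw [hc₂f]; exact hvalQ x (hPQ hx)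
    · rw [hc₂f]; exact hveq
    · rw [hc₂f]; exact hx₀eq.ge
  exact ⟨hx₀vert, hvvert, hvx₀, ⟨y, hyseg, hyint⟩⟩
end
end
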